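/- arXiv:1901.02156 — 2 statements merged into one kernel-verified Lean document; each statement's English description precedes it below -/
import Mathlib

section
/- Summed credit over all targets: in a finite DAG with nonnegative edge weights, removing edge e = (u,v) decreases Σ_{w ∈ V} Γ_{x,w} by exactly (Γ_{x,u} · γ_{(u,v)}) · Σ_{w ∈ V} Γ_{v,w}, where all quantities on the right are computed in the original graph. -/
/-- `IsPath E s w p` : `p` is a list of consecutive directed edges of `E` from `s` to `w`. -/
def IsPath {V : Type*} (E : Finset (V × V)) : V → V → List (V × V) → Prop
  | s, w, [] => s = w
  | s, w, e :: p => e ∈ E ∧ e.1 = s ∧ IsPath E e.2 w p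

/-- The weight of a path: product of edge weights along it. -/
def pathWeight {V : Type*} (γ : V × V → ℝ) (p : List (V × V)) : ℝ :=
  (p.map γ).prod

lemma pathWeight_append {V : Type*} (γ : V × V → ℝ) (q r : List (V × V)) :
    pathWeight γ (q ++ r) = pathWeight γ q * pathWeight γ r := by
  simp [pathWeight]

lemma isPath_append {V : Type*} (E : Finset (V × V)) (s w : V) (q r : List (V × V)) :
    IsPath E s w (q ++ r) ↔ ∃ m, IsPath E s m q ∧ IsPath E m w r := by
  induction q generalizing s with
  | nil =>
    constructor
    · intro h; exact ⟨s, rfl, h⟩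
    · rintro ⟨m, hm, h⟩; cases hm; exact h
  | cons e q ih =>
    constructor
    · rintro ⟨he, h1, h2⟩
      obtain ⟨m, hm1, hm2⟩ := (ih e.2).1 h2
      exact ⟨m, ⟨he, h1, hm1⟩, hm2⟩
    · rintro ⟨m, ⟨he, h1, hq⟩, hr⟩
      exact ⟨he, h1, (ih e.2).2 ⟨m, hq, hr⟩⟩

lemma isPath_topo_le {V : Type*} (E : Finset (V × V)) (topo : V → ℕ)
    (hdag : ∀ e ∈ E, topo e.1 < topo e.2) {s w : V} {p : List (V × V)}
    (h : IsPath E s w p) : topo s ≤ topo w := by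
  induction p generalizing s with
  | nil => cases h; exact le_rfl
  | cons e q ih =>
    obtain ⟨he, h1, h2⟩ := h
    have hd := hdag e he
    have hi := ih h2
    have h1' : topo e.1 = topo s := by rw [h1]
    omega

lemma isPath_mem_topo {V : Type*} (E : Finset (V × V)) (topo : V → ℕ)
    (hdag : ∀ e ∈ E, topo e.1 < topo e.2) {s w : V} {p : List (V × V)} {e : V × V}
    (h : IsPath E s w p) (he : e ∈ p) : topo s ≤ topo e.1 ∧ topo e.2 ≤ topo w := by
  induction p generalizing s with
  | nil => cases he
  | cons a q ih =>
    obtain ⟨ha, h1, h2⟩ := h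
    rcases List.mem_cons.1 he with rfl | he'
    · subst h1
      exact ⟨le_rfl, isPath_topo_le E topo hdag h2⟩
    · obtain ⟨l1, l2⟩ := ih h2 he'
      have hd := hdag a ha
      have h1' : topo a.1 = topo s := by rw [h1]
      omega

lemma takeWhile_spec {α : Type*} [DecidableEq α] (c : α) (q r : List α)
    (hq : ∀ e ∈ q, e ≠ c) :
    (q ++ c :: r).takeWhile (· ≠ c) = q ∧ (q ++ c :: r).dropWhile (· ≠ c) = c :: r := by
  induction q with
  | nil => simp [List.takeWhile, List.dropWhile]
  | cons a q ih =>
    have ha : a ≠ c := hq a List.mem_cons_self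
    have h2 := ih (fun e he => hq e (List.mem_cons_of_mem a he))
    rw [List.cons_append, List.takeWhile_cons, List.dropWhile_cons]
    have hb : decide (a ≠ c) = true := by simp [ha]
    rw [hb]
    simp only [if_true, h2.1, h2.2, and_self]

lemma split_spec {α : Type*} [DecidableEq α] {c : α} {p : List α} (h : c ∈ p) :
    p.takeWhile (· ≠ c) ++ c :: (p.dropWhile (· ≠ c)).tail = p := by
  induction p with
  | nil => cases h
  | cons a q ih =>
    by_cases ha : a = c
    · subst ha; simp [List.takeWhile, List.dropWhile]
    · have hc : c ∈ q := by
        rcases List.mem_cons.1 h with h' | h'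
        · exact absurd h'.symm ha
        · exact h'
      rw [List.takeWhile_cons, List.dropWhile_cons]
      have hb : decide (a ≠ c) = true := by simp [ha]
      rw [hb]
      simp only [if_true, List.cons_append, ih hc]

/-- Summed credit over all targets: in a finite DAG with nonnegative edge weights, removing
the edge `(u,v)` decreases `∑_{w ∈ V} Γ_{x,w}` by exactly
`(Γ_{x,u} * γ (u,v)) * ∑_{w ∈ V} Γ_{v,w}`, all computed in the original graph. -/
theorem summed_edge_deletion_credit {V : Type*} [Fintype V] [DecidableEq V]
    (E : Finset (V × V)) (γ : V × V → ℝ) (hγ : ∀ e, 0 ≤ γ e)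
    (topo : V → ℕ) (hdag : ∀ e ∈ E, topo e.1 < topo e.2)
    (x u v : V) (huv : (u, v) ∈ E)
    (Px Pv : V → Finset (List (V × V))) (Pxu : Finset (List (V × V)))
    (hPx : ∀ w p, p ∈ Px w ↔ IsPath E x w p)
    (hPv : ∀ w p, p ∈ Pv w ↔ IsPath E v w p)
    (hPxu : ∀ p, p ∈ Pxu ↔ IsPath E x u p) :
    (∑ w : V, ∑ p ∈ Px w, pathWeight γ p) -
      (∑ w : V, ∑ p ∈ (Px w).filter (fun p => (u, v) ∉ p), pathWeight γ p) =
    ((∑ p ∈ Pxu, pathWeight γ p) * γ (u, v)) *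
      (∑ w : V, ∑ p ∈ Pv w, pathWeight γ p) := by
  classical
  have huvlt := hdag _ huv
  have hnotmem : ∀ q, IsPath E x u q → (u, v) ∉ q := by
    intro q hq hmem
    have h2 : topo v ≤ topo u := (isPath_mem_topo E topo hdag hq hmem).2
    have h3 : topo u < topo v := huvlt
    omega
  have key : ∀ w : V,
      ∑ p ∈ (Px w).filter (fun p => (u, v) ∈ p), pathWeight γ p =
        (∑ q ∈ Pxu, pathWeight γ q) * γ (u, v) * (∑ r ∈ Pv w, pathWeight γ r) := by
    intro w
    rw [Finset.sum_mul, Finset.sum_mul_sum, ← Finset.sum_product']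
    apply Finset.sum_nbij' (i := fun p => (p.takeWhile (· ≠ (u, v)), (p.dropWhile (· ≠ (u, v))).tail))
      (j := fun qr => qr.1 ++ (u, v) :: qr.2)
    · intro p hp
      simp only [Finset.mem_filter] at hp
      obtain ⟨hp1, hp2⟩ := hp
      have hsplit := split_spec (c := (u, v)) (p := p) hp2
      have hpath : IsPath E x w p := (hPx w p).1 hp1
      rw [← hsplit] at hpath
      obtain ⟨m, hm1, hm2⟩ := (isPath_append E x w _ _).1 hpath
      obtain ⟨he, h1, h2⟩ := hm2
      have hm : m = u := h1.symm
      subst hm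
      simp only [Finset.mem_product]
      exact ⟨(hPxu _).2 hm1, (hPv w _).2 h2⟩
    · intro qr hqr
      simp only [Finset.mem_product] at hqr
      have hq := (hPxu _).1 hqr.1
      have hr := (hPv w _).1 hqr.2
      simp only [Finset.mem_filter]
      constructor
      · apply (hPx w _).2
        exact (isPath_append E x w _ _).2 ⟨u, hq, ⟨huv, rfl, hr⟩⟩
      · exact List.mem_append.2 (Or.inr List.mem_cons_self)
    · intro p hp
      simp only [Finset.mem_filter] at hp
      exact split_spec hp.2
    · intro qr hqr
      simp only [Finset.mem_product] at hqr
      have hq := hnotmem _ ((hPxu _).1 hqr.1)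
      have hq' : ∀ e ∈ qr.1, e ≠ (u, v) := fun e he h => hq (h ▸ he)
      have hts := takeWhile_spec (u, v) qr.1 qr.2 hq'
      rw [hts.1, hts.2]
      simp
    · intro p hp
      simp only [Finset.mem_filter] at hp
      have hsplit := split_spec (c := (u, v)) (p := p) hp.2
      conv_lhs => rw [← hsplit]
      rw [pathWeight_append]
      simp [pathWeight]
      ring
  have hsplit_sum : ∀ w : V,
      (∑ p ∈ Px w, pathWeight γ p) -
        ∑ p ∈ (Px w).filter (fun p => (u, v) ∉ p), pathWeight γ p =
      ∑ p ∈ (Px w).filter (fun p => (u, v) ∈ p), pathWeight γ p := by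
    intro w
    rw [← Finset.sum_filter_add_sum_filter_not (Px w) (fun p => (u, v) ∈ p)]
    ring
  rw [← Finset.sum_sub_distrib]
  simp_rw [hsplit_sum, key]
  rw [← Finset.mul_sum]
end

section
/- Greedy (1 − 1/e)-approximation for cardinality-constrained monotone submodular maximization: let Δ : 2^C → ℝ≥0 be monotone submodular with Δ(∅) = 0, and let the greedy algorithm build B_k by iteratively adding the element with maximum marginal gain. Then Δ(B_k) ≥ (1 − (1 − 1/k)^k) · max{Δ(B) : |B| ≤ k} ≥ (1 − 1/e) · max{Δ(B) : |B| ≤ k}. -/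
lemma marg_sum {α : Type*} [DecidableEq α] (Δ : Finset α → ℝ)
    (hsub : ∀ S T : Finset α, ∀ e : α, S ⊆ T → e ∉ T →
      Δ (insert e T) - Δ T ≤ Δ (insert e S) - Δ S)
    (S T : Finset α) :
    Δ (S ∪ T) - Δ T ≤ ∑ e ∈ S \ T, (Δ (insert e T) - Δ T) := by
  classical
  induction S using Finset.induction with
  | empty => simp
  | @insert a S ha ih =>
    by_cases haT : a ∈ T
    · have h1 : insert a S ∪ T = S ∪ T := by
        rw [Finset.insert_union, Finset.insert_eq_self.mpr (Finset.mem_union_right S haT)]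
      have h2 : insert a S \ T = S \ T := Finset.insert_sdiff_of_mem S haT
      rw [h1, h2]; exact ih
    · have haST : a ∉ S ∪ T := by simp [ha, haT]
      have h1 : insert a S ∪ T = insert a (S ∪ T) := Finset.insert_union a S T
      have h2 : insert a S \ T = insert a (S \ T) := Finset.insert_sdiff_of_notMem S haT
      have haSd : a ∉ S \ T := by simp [ha]
      rw [h1, h2, Finset.sum_insert haSd]
      have hkey : Δ (insert a (S ∪ T)) - Δ (S ∪ T) ≤ Δ (insert a T) - Δ T :=
        hsub T (S ∪ T) a Finset.subset_union_right haST
      have : Δ (insert a (S ∪ T)) - Δ T =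
          (Δ (insert a (S ∪ T)) - Δ (S ∪ T)) + (Δ (S ∪ T) - Δ T) := by ring
      rw [this]
      exact add_le_add hkey ih

/-- Greedy `(1 − 1/e)`-approximation for cardinality-constrained monotone submodular
maximization: if `Δ` is nonnegative, normalized, monotone and submodular, and `B t` is the
greedy sequence (each step adding an element of maximum marginal gain), then for every
feasible set `Bopt` with `|Bopt| ≤ k`,
`Δ (B k) ≥ (1 − (1 − 1/k)^k) Δ Bopt ≥ (1 − 1/e) Δ Bopt`. -/
theorem greedy_submodular_approximation {α : Type*} [DecidableEq α]
    (Δ : Finset α → ℝ)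
    (hnn : ∀ B, 0 ≤ Δ B) (h0 : Δ ∅ = 0)
    (hmono : ∀ S T : Finset α, S ⊆ T → Δ S ≤ Δ T)
    (hsub : ∀ S T : Finset α, ∀ e : α, S ⊆ T → e ∉ T →
      Δ (insert e T) - Δ T ≤ Δ (insert e S) - Δ S)
    (k : ℕ) (hk : 0 < k)
    (B : ℕ → Finset α) (hB0 : B 0 = ∅)
    (hgreedy : ∀ t, ∃ e, e ∉ B t ∧ B (t + 1) = insert e (B t) ∧
      ∀ e', Δ (insert e' (B t)) ≤ Δ (insert e (B t)))
    (Bopt : Finset α) (hBopt : Bopt.card ≤ k) :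
    (1 - (1 - 1 / (k : ℝ)) ^ k) * Δ Bopt ≤ Δ (B k) ∧
    (1 - 1 / Real.exp 1) * Δ Bopt ≤ Δ (B k) := by
  classical
  have hk1 : (1 : ℝ) ≤ (k : ℝ) := by exact_mod_cast hk
  have hkpos : (0 : ℝ) < (k : ℝ) := by positivity
  -- key step inequality
  have key : ∀ t, Δ Bopt - Δ (B t) ≤ (k : ℝ) * (Δ (B (t + 1)) - Δ (B t)) := by
    intro t
    obtain ⟨e, he, hBe, hmax⟩ := hgreedy t
    have gain_nn : 0 ≤ Δ (B (t + 1)) - Δ (B t) := by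
      rw [hBe]
      have := hmono (B t) (insert e (B t)) (Finset.subset_insert _ _)
      linarith
    have h1 : Δ Bopt ≤ Δ (Bopt ∪ B t) := hmono _ _ Finset.subset_union_left
    have h2 := marg_sum Δ hsub Bopt (B t)
    have h3 : ∑ x ∈ Bopt \ B t, (Δ (insert x (B t)) - Δ (B t)) ≤
        ∑ _x ∈ Bopt \ B t, (Δ (B (t + 1)) - Δ (B t)) := by
      apply Finset.sum_le_sum
      intro x _
      have := hmax x
      rw [hBe]; linarith
    rw [Finset.sum_const, nsmul_eq_mul] at h3
    have hcard : ((Bopt \ B t).card : ℝ) ≤ (k : ℝ) := by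
      have : (Bopt \ B t).card ≤ Bopt.card := Finset.card_le_card (Finset.sdiff_subset)
      exact_mod_cast this.trans hBopt
    have h4 : ((Bopt \ B t).card : ℝ) * (Δ (B (t + 1)) - Δ (B t)) ≤
        (k : ℝ) * (Δ (B (t + 1)) - Δ (B t)) :=
      mul_le_mul_of_nonneg_right hcard gain_nn
    linarith
  -- inductive bound
  have hq0 : (0:ℝ) ≤ 1 - 1 / (k:ℝ) := by
    have : 1 / (k:ℝ) ≤ 1 := by
      rw [div_le_one hkpos]; exact hk1
    linarith
  have main : ∀ t, Δ Bopt - Δ (B t) ≤ (1 - 1 / (k : ℝ)) ^ t * Δ Bopt := by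
    intro t
    induction t with
    | zero => simp [hB0, h0]
    | succ t ih =>
      have hkey := key t
      -- Δ Bopt - Δ(B(t+1)) ≤ (1 - 1/k)(Δ Bopt - Δ(B t))
      have step : Δ Bopt - Δ (B (t + 1)) ≤ (1 - 1 / (k:ℝ)) * (Δ Bopt - Δ (B t)) := by
        have hinv : (0:ℝ) ≤ 1 / (k:ℝ) := by positivity
        have h5 := mul_le_mul_of_nonneg_left hkey hinv
        have h6 : (1/(k:ℝ)) * ((k:ℝ) * (Δ (B (t+1)) - Δ (B t))) = Δ (B (t+1)) - Δ (B t) := by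
          field_simp
        nlinarith [h5, h6]
      have step2 : (1 - 1 / (k:ℝ)) * (Δ Bopt - Δ (B t)) ≤
          (1 - 1 / (k:ℝ)) * ((1 - 1 / (k : ℝ)) ^ t * Δ Bopt) :=
        mul_le_mul_of_nonneg_left ih hq0
      calc Δ Bopt - Δ (B (t + 1)) ≤ (1 - 1 / (k:ℝ)) * (Δ Bopt - Δ (B t)) := step
        _ ≤ (1 - 1 / (k:ℝ)) * ((1 - 1 / (k : ℝ)) ^ t * Δ Bopt) := step2
        _ = (1 - 1 / (k : ℝ)) ^ (t + 1) * Δ Bopt := by ring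
  have first : (1 - (1 - 1 / (k : ℝ)) ^ k) * Δ Bopt ≤ Δ (B k) := by
    have := main k
    nlinarith
  refine ⟨first, ?_⟩
  have hexp : (1 - 1 / (k:ℝ)) ^ k ≤ 1 / Real.exp 1 := by
    have h1 : 1 - 1 / (k:ℝ) ≤ Real.exp (-(1 / (k:ℝ))) := by
      have := Real.add_one_le_exp (-(1 / (k:ℝ)))
      linarith
    have h2 : (1 - 1 / (k:ℝ)) ^ k ≤ (Real.exp (-(1 / (k:ℝ)))) ^ k :=
      pow_le_pow_left₀ hq0 h1 k
    have h3 : (Real.exp (-(1 / (k:ℝ)))) ^ k = Real.exp (-(1 / (k:ℝ)) * k) := by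
      rw [← Real.exp_nat_mul]; ring_nf
    have h4 : -(1 / (k:ℝ)) * k = -1 := by field_simp
    rw [h3, h4] at h2
    rw [Real.exp_neg] at h2
    simpa [one_div] using h2
  have : (1 - 1 / Real.exp 1) * Δ Bopt ≤ (1 - (1 - 1 / (k : ℝ)) ^ k) * Δ Bopt := by
    apply mul_le_mul_of_nonneg_right _ (hnn Bopt)
    linarith
  linarith
end
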